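/- (Representation theorem.) Let n ≥ 2 and let A be a transposition algebra of dimension n. Then for every nonzero a ∈ A there is a homomorphism h : A → 𝒫(Perm(Fin n)) with h(a) ≠ ∅; that is, h(x ⊓ y) = h(x) ∩ h(y), h(xᶜ) = Perm(Fin n) ∖ h(x), h(1) = Perm(Fin n), and h(s_{ij}x) = {ξ ∈ Perm(Fin n) : ξ ∘ [i,j] ∈ h(x)} for all i ≠ j < n. (Hence every algebra satisfying Σ_n is a subdirect product of relativized transposition set algebras on permutable sets.) -/

import Mathlib

/-- A transposition algebra with dimensions indexed by `ι`: a Boolean algebra with unary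
operations `s i j` (for `i ≠ j`) satisfying the equation set `Σ_n` (the substitutions are
Boolean endomorphisms and obey the relations presenting the symmetric group by its
transpositions). -/
structure TranspositionAlgebra (ι : Type*) (A : Type*) [BooleanAlgebra A] where
  s : ι → ι → A → A
  map_inf : ∀ i j : ι, i ≠ j → ∀ x y : A, s i j (x ⊓ y) = s i j x ⊓ s i j y
  map_compl : ∀ i j : ι, i ≠ j → ∀ x : A, s i j xᶜ = (s i j x)ᶜ
  symm : ∀ i j : ι, i ≠ j → s i j = s j i
  invol : ∀ i j : ι, i ≠ j → ∀ x : A, s i j (s i j x) = x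
  comm : ∀ i j k l : ι, i ≠ j → k ≠ l → i ≠ k → i ≠ l → j ≠ k → j ≠ l →
    ∀ x : A, s i j (s k l x) = s k l (s i j x)
  braid : ∀ i j k : ι, i ≠ j → j ≠ k → i ≠ k →
    ∀ x : A, s i j (s j k (s i j x)) = s i k x


namespace TARepr

variable {n : ℕ}

/-- Letters: ordered pairs of distinct indices. -/
abbrev Lam (n : ℕ) := {p : Fin n × Fin n // p.1 ≠ p.2}

def ltr (a x : Fin n) (h : a ≠ x) : Lam n := ⟨(a, x), h⟩

section Abstract

variable {G : Type*} [Group G]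

def tprod (t : Lam n → G) (L : List (Lam n)) : G := (L.map t).prod

@[simp] lemma tprod_nil (t : Lam n → G) : tprod t ([] : List (Lam n)) = 1 := rfl

@[simp] lemma tprod_cons (t : Lam n → G) (p : Lam n) (L : List (Lam n)) :
    tprod t (p :: L) = t p * tprod t L := by simp [tprod]

lemma tprod_append (t : Lam n → G) (L L' : List (Lam n)) :
    tprod t (L ++ L') = tprod t L * tprod t L' := by simp [tprod]

lemma t_congr (t : Lam n → G) {a b c d : Fin n} (h1 : a = c) (h2 : b = d)
    (hab : a ≠ b) (hcd : c ≠ d) : t ⟨(a, b), hab⟩ = t ⟨(c, d), hcd⟩ := by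
  subst h1; subst h2; rfl

/-- The relations presenting the symmetric group by transpositions. -/
structure Rels (t : Lam n → G) : Prop where
  invol : ∀ p, t p * t p = 1
  symm : ∀ (a x : Fin n) (h : a ≠ x), t (ltr a x h) = t (ltr x a h.symm)
  comm : ∀ (a b c d : Fin n) (hab : a ≠ b) (hcd : c ≠ d), a ≠ c → a ≠ d → b ≠ c → b ≠ d →
    t (ltr a b hab) * t (ltr c d hcd) = t (ltr c d hcd) * t (ltr a b hab)
  braid : ∀ (a b c : Fin n) (hab : a ≠ b) (hbc : b ≠ c) (hac : a ≠ c),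
    t (ltr a b hab) * t (ltr b c hbc) * t (ltr a b hab) = t (ltr a c hac)

variable {t : Lam n → G}

lemma Rels.inv_eq (ht : Rels t) (p : Lam n) : (t p)⁻¹ = t p :=
  inv_eq_of_mul_eq_one_right (ht.invol p)

private lemma braid_shift {u v w : G} (h2 : u * u = 1) (hb : u * v * u = w) :
    u * v = w * u := by
  have h : u * v = u * v * (u * u) := by rw [h2, mul_one]
  rw [h, ← mul_assoc, hb]

/-- `t(ax) t(xe) = t(xe) t(ae)` for pairwise distinct `a,x,e`. -/
lemma Rels.rule1 (ht : Rels t) (a x e : Fin n) (hax : a ≠ x) (hxe : x ≠ e) (hae : a ≠ e) :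
    t (ltr a x hax) * t (ltr x e hxe) = t (ltr x e hxe) * t (ltr a e hae) := by
  have h1 : t (ltr x e hxe) * t (ltr e a hae.symm) = t (ltr x a hax.symm) * t (ltr x e hxe) :=
    braid_shift (ht.invol _) (ht.braid x e a hxe hae.symm hax.symm)
  rw [ht.symm a x hax, ht.symm a e hae, ← h1, ht.symm e a hae.symm]

/-- `t(ax) t(ae) = t(xe) t(ax)` for pairwise distinct `a,x,e`. -/
lemma Rels.rule2 (ht : Rels t) (a x e : Fin n) (hax : a ≠ x) (hae : a ≠ e) (hxe : x ≠ e) :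
    t (ltr a x hax) * t (ltr a e hae) = t (ltr x e hxe) * t (ltr a x hax) := by
  have h1 : t (ltr x a hax.symm) * t (ltr a e hae) = t (ltr x e hxe) * t (ltr x a hax.symm) :=
    braid_shift (ht.invol _) (ht.braid x a e hax.symm hae hxe)
  rw [ht.symm a x hax]
  exact h1

/-- No letter of `L` involves the index `a`. -/
def NoA (a : Fin n) (L : List (Lam n)) : Prop := ∀ p ∈ L, p.val.1 ≠ a ∧ p.val.2 ≠ a

/-- Pushing the letter `(a,x)` to the right through `L`. -/
lemma push (ht : Rels t) (a : Fin n) :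
    ∀ (L : List (Lam n)) (x : Fin n) (hax : a ≠ x),
    (∃ M : List (Lam n), M.length + 1 ≤ L.length ∧
      tprod t (ltr a x hax :: L) = tprod t M) ∨
    (∃ (M : List (Lam n)) (y : Fin n) (hy : a ≠ y), NoA a M ∧
      tprod t (ltr a x hax :: L) = tprod t M * t (ltr a y hy)) := by
  intro L
  induction L with
  | nil =>
    intro x hax
    right
    refine ⟨[], x, hax, ?_, by simp⟩
    intro p hp; exact absurd hp List.not_mem_nil
  | cons p L' ih =>
    intro x hax
    obtain ⟨⟨c, d⟩, hcd⟩ := p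
    have hcd' : c ≠ d := hcd
    -- generic step for the non-cancelling cases
    have step : ∀ (q : Lam n) (x' : Fin n) (hax' : a ≠ x'), q.val.1 ≠ a → q.val.2 ≠ a →
        t (ltr a x hax) * t ⟨(c, d), hcd⟩ = t q * t (ltr a x' hax') →
        (∃ M : List (Lam n), M.length + 1 ≤ (⟨(c,d),hcd⟩ :: L' : List (Lam n)).length ∧
          tprod t (ltr a x hax :: ⟨(c,d),hcd⟩ :: L') = tprod t M) ∨
        (∃ (M : List (Lam n)) (y : Fin n) (hy : a ≠ y), NoA a M ∧
          tprod t (ltr a x hax :: ⟨(c,d),hcd⟩ :: L') = tprod t M * t (ltr a y hy)) := by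
      intro q x' hax' hq1 hq2 heq
      have key : tprod t (ltr a x hax :: ⟨(c,d),hcd⟩ :: L')
          = t q * tprod t (ltr a x' hax' :: L') := by
        simp only [tprod_cons, ← mul_assoc, heq]
      rcases ih x' hax' with ⟨M, hM, he⟩ | ⟨M, y, hy, hNoA, he⟩
      · left
        refine ⟨q :: M, ?_, ?_⟩
        · simpa using Nat.succ_le_succ hM
        · rw [key, he, tprod_cons]
      · right
        refine ⟨q :: M, y, hy, ?_, ?_⟩
        · intro r hr
          rcases List.mem_cons.mp hr with h | h
          · subst h; exact ⟨hq1, hq2⟩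
          · exact hNoA r h
        · rw [key, he, tprod_cons, mul_assoc]
    -- case analysis on the letter (c,d)
    by_cases hca : c = a
    · by_cases hdx : d = x
      · -- cancellation: (c,d) = (a,x)
        left
        refine ⟨L', by simp, ?_⟩
        have he : t (⟨(c, d), hcd⟩ : Lam n) = t (ltr a x hax) :=
          t_congr t hca hdx hcd' hax
        simp only [tprod_cons, ← mul_assoc, he, ht.invol, one_mul]
      · -- (c,d) = (a,d), d ≠ a, d ≠ x : rule2 with e := d
        have had : a ≠ d := hca ▸ hcd'
        have hxd : x ≠ d := fun h => hdx h.symm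
        refine step (ltr x d hxd) x hax hax.symm had.symm ?_
        have he : t (⟨(c, d), hcd⟩ : Lam n) = t (ltr a d had) := t_congr t hca rfl hcd' had
        rw [he]
        exact ht.rule2 a x d hax had hxd
    · by_cases hda : d = a
      · by_cases hcx : c = x
        · -- cancellation: (c,d) = (x,a)
          left
          refine ⟨L', by simp, ?_⟩
          have he : t (⟨(c, d), hcd⟩ : Lam n) = t (ltr x a hax.symm) :=
            t_congr t hcx hda hcd' hax.symm
          have he2 : t (ltr x a hax.symm) = t (ltr a x hax) := (ht.symm a x hax).symm
          simp only [tprod_cons, ← mul_assoc, he, he2, ht.invol, one_mul]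
        · -- (c,d) = (c,a), c ≠ a, c ≠ x : symm then rule2 with e := c
          have hac : a ≠ c := Ne.symm hca
          have hxc : x ≠ c := fun h => hcx h.symm
          refine step (ltr x c hxc) x hax hax.symm hca ?_
          have he : t (⟨(c, d), hcd⟩ : Lam n) = t (ltr c a (hda ▸ hcd')) :=
            t_congr t rfl hda hcd' _
          rw [he, ht.symm c a (hda ▸ hcd')]
          exact ht.rule2 a x c hax hac hxc
      · have hac : a ≠ c := fun h => hca h.symm
        have had : a ≠ d := fun h => hda h.symm
        by_cases hxc : x = c
        · -- (c,d) = (x,d) : rule1 with e := d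
          have hxd : x ≠ d := hxc ▸ hcd'
          refine step (ltr x d hxd) d had hax.symm had.symm ?_
          have he : t (⟨(c, d), hcd⟩ : Lam n) = t (ltr x d hxd) := t_congr t hxc.symm rfl hcd' hxd
          rw [he]
          exact ht.rule1 a x d hax hxd had
        · by_cases hxd : x = d
          · -- (c,d) = (c,x) : symm then rule1 with e := c
            have hxc' : x ≠ c := hxc
            refine step (ltr x c hxc') c hac hax.symm hca ?_
            have he : t (⟨(c, d), hcd⟩ : Lam n) = t (ltr c x (hxd ▸ hcd')) :=
              t_congr t rfl hxd.symm hcd' _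
            rw [he, ht.symm c x (hxd ▸ hcd')]
            exact ht.rule1 a x c hax hxc' hac
          · -- disjoint : commute
            refine step ⟨(c, d), hcd⟩ x hax hca hda ?_
            exact ht.comm a x c d hax hcd' hac had hxc hxd

end Abstract


/-- The letter-to-transposition map. -/
def sw : Lam n → Equiv.Perm (Fin n) := fun p => Equiv.swap p.val.1 p.val.2

lemma swap_comm_disjoint {α : Type*} [DecidableEq α] {a b c d : α}
    (hac : a ≠ c) (had : a ≠ d) (hbc : b ≠ c) (hbd : b ≠ d) :
    Equiv.swap a b * Equiv.swap c d = Equiv.swap c d * Equiv.swap a b := by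
  have h : Equiv.swap ((Equiv.swap c d) a) ((Equiv.swap c d) b)
      = Equiv.swap c d * Equiv.swap a b * (Equiv.swap c d)⁻¹ :=
    Equiv.swap_apply_apply _ a b
  rw [Equiv.swap_apply_of_ne_of_ne hac had, Equiv.swap_apply_of_ne_of_ne hbc hbd] at h
  calc Equiv.swap a b * Equiv.swap c d
      = (Equiv.swap c d * Equiv.swap a b * (Equiv.swap c d)⁻¹) * Equiv.swap c d := by rw [← h]
    _ = Equiv.swap c d * Equiv.swap a b := by rw [mul_assoc, inv_mul_cancel, mul_one]

lemma rels_sw : Rels (sw (n := n)) where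
  invol := fun p => Equiv.swap_mul_self _ _
  symm := fun a x h => Equiv.swap_comm a x
  comm := fun a b c d hab hcd h1 h2 h3 h4 => swap_comm_disjoint h1 h2 h3 h4
  braid := by
    intro a b c hab hbc hac
    have h := Equiv.swap_mul_swap_mul_swap (x := c) (y := b) (z := a) hbc.symm hac.symm
    rw [Equiv.swap_comm b a, Equiv.swap_comm c b] at h
    exact h

/-- Pairing two letter maps into the product group. -/
lemma rels_pair {G₁ G₂ : Type*} [Group G₁] [Group G₂] {t₁ : Lam n → G₁} {t₂ : Lam n → G₂}
    (h₁ : Rels t₁) (h₂ : Rels t₂) : Rels (fun p => (t₁ p, t₂ p)) where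
  invol := fun p => by ext <;> simp [h₁.invol, h₂.invol]
  symm := fun a x h => by ext <;> simp [h₁.symm a x h, h₂.symm a x h]
  comm := fun a b c d hab hcd u1 u2 u3 u4 => by
    ext <;> simp [h₁.comm a b c d hab hcd u1 u2 u3 u4, h₂.comm a b c d hab hcd u1 u2 u3 u4]
  braid := fun a b c hab hbc hac => by
    ext <;> simp [h₁.braid a b c hab hbc hac, h₂.braid a b c hab hbc hac]

lemma tprod_pair {G₁ G₂ : Type*} [Group G₁] [Group G₂] (t₁ : Lam n → G₁) (t₂ : Lam n → G₂)
    (L : List (Lam n)) : tprod (fun p => (t₁ p, t₂ p)) L = (tprod t₁ L, tprod t₂ L) := by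
  induction L with
  | nil => simp [Prod.ext_iff]
  | cons p L ih => simp [ih, Prod.ext_iff]

lemma sprod_ne (a : Fin n) : ∀ (L : List (Lam n)), NoA a L →
    ∀ z : Fin n, z ≠ a → tprod sw L z ≠ a := by
  intro L
  induction L with
  | nil => intro _ z hz; simpa using hz
  | cons p L ih =>
    intro hNoA z hz
    obtain ⟨h1, h2⟩ := hNoA p List.mem_cons_self
    have hL : NoA a L := fun q hq => hNoA q (List.mem_cons_of_mem p hq)
    have hz' := ih hL z hz
    rw [tprod_cons, Equiv.Perm.mul_apply]
    rcases Equiv.swap_apply_def p.val.1 p.val.2 (tprod sw L z) with _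
    by_cases hc : tprod sw L z = p.val.1
    · rw [sw, hc, Equiv.swap_apply_left]; exact h2
    · by_cases hd : tprod sw L z = p.val.2
      · rw [sw, hd, Equiv.swap_apply_right]; exact h1
      · rw [sw, Equiv.swap_apply_of_ne_of_ne hc hd]; exact hz'

/-- Main lemma: a word of transpositions with product 1 evaluates to 1 in any group
satisfying the relations. -/
lemma main {G : Type*} [Group G] {t : Lam n → G} (ht : Rels t) :
    ∀ (N : ℕ) (L : List (Lam n)), L.length ≤ N → tprod sw L = 1 → tprod t L = 1 := by
  intro N
  induction N with
  | zero =>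
    intro L hL _
    rw [List.length_eq_zero_iff.mp (Nat.le_zero.mp hL)]
    simp
  | succ N ih =>
    intro L hL hs
    match L with
    | [] => simp
    | ⟨⟨a, x⟩, hax⟩ :: L' =>
      have hax' : a ≠ x := hax
      set tp : Lam n → Equiv.Perm (Fin n) × G := fun p => (sw p, t p) with htp
      have hrp : Rels tp := rels_pair rels_sw ht
      have hL0 : (⟨⟨a, x⟩, hax⟩ :: L' : List (Lam n)) = ltr a x hax' :: L' := rfl
      rcases push hrp a L' x hax' with ⟨M, hM, he⟩ | ⟨M, y, hy, hNoA, he⟩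
      · rw [tprod_pair, tprod_pair] at he
        have hs' : tprod sw M = 1 := by
          have := congrArg Prod.fst he
          simp only at this
          rw [← hL0] at this
          rw [← this]; exact hs
        have hlen : M.length ≤ N := by
          have h1 : L'.length + 1 ≤ N + 1 := by simpa using hL
          omega
        have ht' := ih M hlen hs'
        have := congrArg Prod.snd he
        simp only at this
        rw [← hL0] at this
        rw [this, ht']
      · rw [tprod_pair, tprod_pair] at he
        exfalso
        have hfst := congrArg Prod.fst he
        simp only [Prod.fst_mul] at hfst
        rw [← hL0] at hfst
        rw [hs] at hfst
        -- hfst : 1 = tprod sw M * sw (ltr a y hy)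
        have happ := congrArg (fun σ : Equiv.Perm (Fin n) => σ a) hfst
        simp only [Equiv.Perm.one_apply, Equiv.Perm.mul_apply] at happ
        have hswa : sw (ltr a y hy) a = y := Equiv.swap_apply_left a y
        rw [hswa] at happ
        exact sprod_ne a M hNoA y hy.symm happ.symm

lemma exists_word (σ : Equiv.Perm (Fin n)) : ∃ L : List (Lam n), tprod sw L = σ := by
  refine Equiv.Perm.swap_induction_on σ ⟨[], by simp⟩ ?_
  rintro f x y hxy ⟨L, hL⟩
  exact ⟨ltr x y hxy :: L, by simp [hL, sw, ltr]⟩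

noncomputable def word (σ : Equiv.Perm (Fin n)) : List (Lam n) := (exists_word σ).choose

lemma word_spec (σ : Equiv.Perm (Fin n)) : tprod sw (word σ) = σ := (exists_word σ).choose_spec

section Phi
variable {G : Type*} [Group G] {t : Lam n → G}

lemma tprod_reverse (ht : Rels t) (L : List (Lam n)) :
    tprod t L.reverse = (tprod t L)⁻¹ := by
  induction L with
  | nil => simp
  | cons p L ih =>
    rw [List.reverse_cons, tprod_append, ih, tprod_cons t p L, mul_inv_rev, ht.inv_eq p]
    simp [tprod]

lemma tprod_eq_of_sw_eq (ht : Rels t) {L L' : List (Lam n)}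
    (h : tprod sw L = tprod sw L') : tprod t L = tprod t L' := by
  have hs : tprod sw (L ++ L'.reverse) = 1 := by
    rw [tprod_append, tprod_reverse  rels_sw, h, mul_inv_cancel]
  have := main ht (L ++ L'.reverse).length (L ++ L'.reverse) le_rfl hs
  rw [tprod_append, tprod_reverse ht] at this
  exact mul_inv_eq_one.mp this

noncomputable def phi (t : Lam n → G) (σ : Equiv.Perm (Fin n)) : G := tprod t (word σ)

lemma phi_mul (ht : Rels t) (σ τ : Equiv.Perm (Fin n)) :
    phi t (σ * τ) = phi t σ * phi t τ := by
  have h : tprod sw (word (σ * τ)) = tprod sw (word σ ++ word τ) := by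
    rw [tprod_append, word_spec, word_spec, word_spec]
  rw [phi, tprod_eq_of_sw_eq ht h, tprod_append]; rfl

lemma phi_one (ht : Rels t) : phi t (1 : Equiv.Perm (Fin n)) = 1 := by
  have h : tprod sw (word (1 : Equiv.Perm (Fin n))) = tprod sw ([] : List (Lam n)) := by
    rw [word_spec]; simp
  rw [phi, tprod_eq_of_sw_eq ht h]; simp

lemma phi_swap (ht : Rels t) (i j : Fin n) (hij : i ≠ j) :
    phi t (Equiv.swap i j) = t (ltr i j hij) := by
  have h : tprod sw (word (Equiv.swap i j)) = tprod sw [ltr i j hij] := by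
    rw [word_spec]; simp [sw, ltr]
  rw [phi, tprod_eq_of_sw_eq ht h]; simp

end Phi

end TARepr

open TARepr

/-- representation theorem: for `n ≥ 2`, every nonzero element `a` of a
transposition algebra of dimension `n` is not annihilated by some homomorphism into the
full transposition set algebra `𝒫(Perm(Fin n))` (relativized to the permutable set of all
permutations of `n`). -/
theorem transpositionAlgebra_representation (n : ℕ) (hn : 2 ≤ n)
    {A : Type*} [BooleanAlgebra A] (M : TranspositionAlgebra (Fin n) A)
    (a : A) (ha : a ≠ ⊥) :
    ∃ h : A → Set (Equiv.Perm (Fin n)),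
      h a ≠ ∅ ∧
      (∀ x y : A, h (x ⊓ y) = h x ∩ h y) ∧
      (∀ x : A, h xᶜ = Set.univ \ h x) ∧
      h ⊤ = Set.univ ∧
      (∀ i j : Fin n, i ≠ j → ∀ x : A,
        h (M.s i j x) = {ξ : Equiv.Perm (Fin n) | ξ * Equiv.swap i j ∈ h x}) := by
  classical
  -- the substitutions as permutations of `A`
  let T : Lam n → Equiv.Perm A := fun p =>
    Function.Involutive.toPerm (M.s p.val.1 p.val.2) (fun x => M.invol p.val.1 p.val.2 p.prop x)
  have hTapp : ∀ (p : Lam n) (z : A), T p z = M.s p.val.1 p.val.2 z := fun p z => rfl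
  have hT : Rels T := by
    constructor
    · intro p; ext z
      simp only [Equiv.Perm.mul_apply, Equiv.Perm.one_apply]
      rw [hTapp, hTapp]
      exact M.invol p.val.1 p.val.2 p.prop z
    · intro a x hax; ext z
      rw [hTapp, hTapp]
      exact congrFun (M.symm a x hax) z
    · intro a b c d hab hcd h1 h2 h3 h4; ext z
      simp only [Equiv.Perm.mul_apply]
      rw [hTapp, hTapp, hTapp, hTapp]
      exact M.comm a b c d hab hcd h1 h2 h3 h4 z
    · intro a b c hab hbc hac; ext z
      simp only [Equiv.Perm.mul_apply]
      rw [hTapp, hTapp, hTapp, hTapp]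
      exact M.braid a b c hab hbc hac z
  -- an ultrafilter (maximal ideal of the Boolean ring) containing `a`
  have ha0 : (toBoolRing a : AsBoolRing A) ≠ 0 := by
    intro h0
    apply ha
    have h1 := congrArg ofBoolRing h0
    simpa using h1
  have hne : Ideal.span {(toBoolRing aᶜ : AsBoolRing A)} ≠ ⊤ := by
    intro htop
    have h1 : (1 : AsBoolRing A) ∈ Ideal.span {(toBoolRing aᶜ : AsBoolRing A)} := by
      rw [htop]; exact Submodule.mem_top
    obtain ⟨r, hr⟩ := Ideal.mem_span_singleton'.mp h1
    apply ha0
    calc (toBoolRing a : AsBoolRing A) = toBoolRing a * 1 := (mul_one _).symm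
      _ = toBoolRing a * (r * toBoolRing aᶜ) := by rw [hr]
      _ = r * (toBoolRing a * toBoolRing aᶜ) := by ring
      _ = r * toBoolRing (a ⊓ aᶜ) := by rw [toBoolRing_inf]
      _ = 0 := by rw [inf_compl_eq_bot, toBoolRing_bot, mul_zero]
  obtain ⟨m, hmax, hIm⟩ := Ideal.exists_le_maximal _ hne
  have hprime : m.IsPrime := hmax.isPrime
  set F : A → Prop := fun x => (toBoolRing x : AsBoolRing A) ∉ m with hF
  have hsum : ∀ x : A, (toBoolRing x : AsBoolRing A) + toBoolRing xᶜ = 1 := by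
    intro x
    rw [← toBoolRing_symmDiff, ← toBoolRing_top]
    congr 1
    rw [symmDiff_def]
    simp [sdiff_eq]
  have hzero : ∀ x : A, (toBoolRing x : AsBoolRing A) * toBoolRing xᶜ = 0 := by
    intro x
    rw [← toBoolRing_inf, inf_compl_eq_bot, toBoolRing_bot]
  have hone : (1 : AsBoolRing A) ∉ m := fun h1 => hmax.ne_top (Ideal.eq_top_iff_one m |>.mpr h1)
  have hFtop : F ⊤ := by
    rw [hF]
    simp only [toBoolRing_top]
    exact hone
  have hFinf : ∀ x y : A, F (x ⊓ y) ↔ (F x ∧ F y) := by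
    intro x y
    rw [hF]
    simp only [toBoolRing_inf]
    constructor
    · intro hm
      exact ⟨fun hx => hm (Ideal.mul_mem_right _ m hx), fun hy => hm (Ideal.mul_mem_left _ _ hy)⟩
    · rintro ⟨hx, hy⟩ hm
      rcases hprime.mem_or_mem hm with h | h
      · exact hx h
      · exact hy h
  have hFcompl : ∀ x : A, F xᶜ ↔ ¬ F x := by
    intro x
    rw [hF]
    simp only [not_not]
    constructor
    · intro hc
      have h0 : (toBoolRing x : AsBoolRing A) * toBoolRing xᶜ ∈ m := by
        rw [hzero]; exact Ideal.zero_mem m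
      rcases hprime.mem_or_mem h0 with h | h
      · exact h
      · exact absurd h hc
    · intro hx hc
      apply hone
      rw [← hsum x]
      exact Ideal.add_mem m hx hc
  have hFa : F a := by
    rw [hF]
    intro hma
    have hc : (toBoolRing aᶜ : AsBoolRing A) ∈ m :=
      hIm (Ideal.subset_span (Set.mem_singleton _))
    apply hone
    rw [← hsum a]
    exact Ideal.add_mem m hma hc
  -- the representation map
  have phi_hom : ∀ ξ : Equiv.Perm (Fin n),
      (∀ x y : A, phi T ξ (x ⊓ y) = phi T ξ x ⊓ phi T ξ y) ∧
      (∀ x : A, phi T ξ xᶜ = (phi T ξ x)ᶜ) := by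
    intro ξ
    refine Equiv.Perm.swap_induction_on ξ ⟨?_, ?_⟩ ?_
    · intro x y; rw [phi_one hT]; simp
    · intro x; rw [phi_one hT]; simp
    · rintro f i j hij ⟨ih1, ih2⟩
      rw [phi_mul hT, phi_swap hT i j hij]
      constructor
      · intro x y
        simp only [Equiv.Perm.mul_apply]
        rw [ih1, hTapp, hTapp, hTapp]
        exact M.map_inf i j hij _ _
      · intro x
        simp only [Equiv.Perm.mul_apply]
        rw [ih2, hTapp, hTapp]
        exact M.map_compl i j hij _
  have phi_top : ∀ ξ : Equiv.Perm (Fin n), phi T ξ ⊤ = ⊤ := by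
    intro ξ
    calc phi T ξ ⊤ = phi T ξ ((⊤ ⊓ ⊤ᶜ)ᶜ : A) := by simp
      _ = (phi T ξ ⊤ ⊓ (phi T ξ ⊤)ᶜ)ᶜ := by rw [(phi_hom ξ).2, (phi_hom ξ).1, (phi_hom ξ).2]
      _ = ⊤ := by simp
  refine ⟨fun x => {ξ : Equiv.Perm (Fin n) | F (phi T ξ x)}, ?_, ?_, ?_, ?_, ?_⟩
  · -- h a ≠ ∅
    have h1 : (1 : Equiv.Perm (Fin n)) ∈ {ξ : Equiv.Perm (Fin n) | F (phi T ξ a)} := by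
      simp only [Set.mem_setOf_eq, phi_one hT, Equiv.Perm.one_apply]
      exact hFa
    exact Set.nonempty_iff_ne_empty.mp ⟨1, h1⟩
  · intro x y
    ext ξ
    simp only [Set.mem_setOf_eq, Set.mem_inter_iff]
    rw [(phi_hom ξ).1]
    exact hFinf _ _
  · intro x
    ext ξ
    simp only [Set.mem_setOf_eq, Set.mem_diff, Set.mem_univ, true_and]
    rw [(phi_hom ξ).2]
    exact hFcompl _
  · ext ξ
    simp only [Set.mem_setOf_eq, Set.mem_univ, iff_true]
    rw [phi_top ξ]
    exact hFtop
  · intro i j hij x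
    ext ξ
    simp only [Set.mem_setOf_eq]
    rw [phi_mul hT, phi_swap hT i j hij]
    simp only [Equiv.Perm.mul_apply]
    rw [hTapp]
    exact Iff.rfl
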